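/- If D is a bounded t-structure on a triangulated category C with heart A, and A ⊆ B where B is the heart of another bounded t-structure, then A = B. -/

import Mathlib

open CategoryTheory Category Limits Pretriangulated

universe v u

variable (C : Type u) [Category.{v} C] [HasZeroObject C] [HasShift C ℤ]
  [Preadditive C] [∀ n : ℤ, (CategoryTheory.shiftFunctor C n).Additive] [Pretriangulated C]

namespace Paper

/-- The right perpendicular of a set of objects. -/
def perpSet (D : Set C) : Set C := {c | ∀ d ∈ D, ∀ φ : d ⟶ c, φ = 0}

/-- A `t`-structure given by its aisle `D`. -/
structure IsTStructure (D : Set C) : Prop where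
  isoClosed : ∀ {x y : C}, (x ≅ y) → x ∈ D → y ∈ D
  shift_mem : ∀ d ∈ D, d⟦(1 : ℤ)⟧ ∈ D
  exists_triangle : ∀ c : C, ∃ d ∈ D, ∃ d' ∈ perpSet C D,
    ∃ (f : d ⟶ c) (g : c ⟶ d') (h : d' ⟶ d⟦(1 : ℤ)⟧),
      Triangle.mk f g h ∈ distTriang C

/-- The shift `S[n]` of a set of objects. -/
def shiftSet (S : Set C) (n : ℤ) : Set C := {c | c⟦(-n : ℤ)⟧ ∈ S}

/-- The heart `D ∩ D^⊥[1]` of a `t`-structure. -/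
def heartSet (D : Set C) : Set C := {c | c ∈ D ∧ c⟦(-1 : ℤ)⟧ ∈ perpSet C D}

/-- Boundedness: every object lies in `D[-n] ∩ D^⊥[n]` for some `n`. -/
def IsBounded (D : Set C) : Prop :=
  ∀ c : C, ∃ n : ℕ, c⟦(n : ℤ)⟧ ∈ D ∧ c⟦(-(n : ℤ))⟧ ∈ perpSet C D

/-- A short exact sequence `0 → t → a → f → 0` in the heart `A`, encoded as a
distinguished triangle `t → a → f → t[1]` whose objects all lie in `A`. -/
def heartTriangle (A : Set C) (t a f : C) : Prop :=
  t ∈ A ∧ a ∈ A ∧ f ∈ A ∧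
    ∃ (i : t ⟶ a) (p : a ⟶ f) (h : f ⟶ t⟦(1 : ℤ)⟧), Triangle.mk i p h ∈ distTriang C

/-- `x` is a simple object of the heart `A`. -/
def SimpleIn (A : Set C) (x : C) : Prop :=
  x ∈ A ∧ ¬ IsZero x ∧ ∀ t f : C, heartTriangle C A t x f → IsZero t ∨ IsZero f

/-- The extension-closed subcategory of `C` generated by `S`. -/
inductive ExtClosure (S : Set C) : C → Prop
  | of {c : C} (h : c ∈ S) : ExtClosure S c
  | zero {c : C} (h : IsZero c) : ExtClosure S c
  | iso {x y : C} (e : x ≅ y) (h : ExtClosure S x) : ExtClosure S y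
  | ext {a b c : C} (f : a ⟶ b) (g : b ⟶ c) (h : c ⟶ a⟦(1 : ℤ)⟧)
      (hT : Triangle.mk f g h ∈ distTriang C)
      (ha : ExtClosure S a) (hc : ExtClosure S c) : ExtClosure S b

/-- The extension closure of `S` inside the heart `A`. -/
inductive HeartExt (A : Set C) (S : Set C) : C → Prop
  | of {c : C} (h : c ∈ S) : HeartExt A S c
  | zero {c : C} (h : IsZero c) (hA : c ∈ A) : HeartExt A S c
  | iso {x y : C} (e : x ≅ y) (hy : y ∈ A) (h : HeartExt A S x) : HeartExt A S y
  | ext {t a f : C} (ht : HeartExt A S t) (hf : HeartExt A S f)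
      (h : heartTriangle C A t a f) : HeartExt A S a

/-- A torsion pair `(T, F)` in the heart `A`. -/
structure TorsionPairIn (A T F : Set C) : Prop where
  subT : T ⊆ A
  subF : F ⊆ A
  isoT : ∀ {x y : C}, (x ≅ y) → x ∈ T → y ∈ T
  isoF : ∀ {x y : C}, (x ≅ y) → x ∈ F → y ∈ F
  hom_zero : ∀ t ∈ T, ∀ f ∈ F, ∀ φ : t ⟶ f, φ = 0
  exists_ses : ∀ a ∈ A, ∃ t ∈ T, ∃ f ∈ F, heartTriangle C A t a f

/-- The perpendicular of `T` taken inside the heart `A`. -/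
def perpIn (A T : Set C) : Set C := {a | a ∈ A ∧ ∀ t ∈ T, ∀ φ : t ⟶ a, φ = 0}

/-- The left tilt `⟨F, T[-1]⟩` of the heart `A` at a torsion class `T` (with `F = T^⊥ ∩ A`). -/
def leftTilt (A T : Set C) : Set C :=
  {c | ExtClosure C (perpIn C A T ∪ shiftSet C T (-1)) c}

/-- Objects of the heart `A` with a finite composition series. -/
inductive FiniteLengthIn (A : Set C) : C → Prop
  | zero {a : C} (h : IsZero a) : FiniteLengthIn A a
  | step {s a q : C} (hs : SimpleIn C A s) (hq : FiniteLengthIn A q)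
      (ht : heartTriangle C A s a q) : FiniteLengthIn A a


section Aux

set_option linter.unusedSectionVars false

variable {C}
variable {D D' : Set C}

noncomputable def shIso {a b c : ℤ} (h : a + b = c) (x : C) : (x⟦a⟧)⟦b⟧ ≅ x⟦c⟧ :=
  ((shiftFunctorAdd' C a b c h).app x).symm

noncomputable def shz (x : C) : x⟦(0:ℤ)⟧ ≅ x := (shiftFunctorZero C ℤ).app x

noncomputable def shCancel (a : ℤ) (x : C) : (x⟦a⟧)⟦-a⟧ ≅ x :=
  shIso (add_neg_cancel a) x ≪≫ shz x

noncomputable def shCancel' (a : ℤ) (x : C) : (x⟦-a⟧)⟦a⟧ ≅ x :=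
  shIso (neg_add_cancel a) x ≪≫ shz x

lemma perp_iso {x y : C} (e : x ≅ y) (hx : x ∈ perpSet C D) : y ∈ perpSet C D := by
  intro d hd φ
  have h0 : φ ≫ e.inv = 0 := hx d hd _
  calc φ = (φ ≫ e.inv) ≫ e.hom := by simp
    _ = 0 := by rw [h0, zero_comp]

lemma perp_zero {x : C} (hx : IsZero x) : x ∈ perpSet C D :=
  fun _ _ φ => hx.eq_of_tgt φ 0

lemma dist_shift {T : Triangle C} (hT : T ∈ distTriang C) (n : ℤ) :
    ∃ (f : T.obj₁⟦n⟧ ⟶ T.obj₂⟦n⟧) (g : T.obj₂⟦n⟧ ⟶ T.obj₃⟦n⟧)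
      (h : T.obj₃⟦n⟧ ⟶ (T.obj₁⟦n⟧)⟦(1:ℤ)⟧),
      Triangle.mk f g h ∈ distTriang C :=
  ⟨_, _, _, Triangle.shift_distinguished T hT n⟩

/-- An object with zero maps to everything in `D^⊥` lies in `D`. -/
lemma mem_of_perp (hD : IsTStructure C D) {b : C}
    (hb : ∀ x ∈ perpSet C D, ∀ φ : b ⟶ x, φ = 0) : b ∈ D := by
  obtain ⟨d, hd, d', hd', f, g, h, hT⟩ := hD.exists_triangle b
  have hg : g = 0 := hb d' hd' g
  obtain ⟨ρ, hρ⟩ := Triangle.yoneda_exact₃ _ hT (𝟙 d') (by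
    show g ≫ _ = 0; rw [hg, zero_comp])
  have hρ0 : ρ = 0 := hd' _ (hD.shift_mem d hd) ρ
  have hz : IsZero d' := by
    rw [IsZero.iff_id_eq_zero, hρ, hρ0, comp_zero]
    rfl
  have : IsIso f := (Triangle.isZero₃_iff_isIso₁ _ hT).1 hz
  exact hD.isoClosed (asIso f) hd

lemma zero_mem (hD : IsTStructure C D) {b : C} (hb : IsZero b) : b ∈ D :=
  mem_of_perp hD fun _ _ φ => hb.eq_of_src φ 0

lemma ext_mem (hD : IsTStructure C D) {T : Triangle C} (hT : T ∈ distTriang C)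
    (h1 : T.obj₁ ∈ D) (h3 : T.obj₃ ∈ D) : T.obj₂ ∈ D := by
  refine mem_of_perp hD fun x hx φ => ?_
  obtain ⟨ψ, hψ⟩ := Triangle.yoneda_exact₂ T hT φ (hx _ h1 _)
  rw [hψ, hx _ h3 ψ, comp_zero]

lemma ext_perp {T : Triangle C} (hT : T ∈ distTriang C)
    (h1 : T.obj₁ ∈ perpSet C D) (h3 : T.obj₃ ∈ perpSet C D) :
    T.obj₂ ∈ perpSet C D := by
  intro d hd φ
  obtain ⟨ψ, hψ⟩ := Triangle.coyoneda_exact₂ T hT φ (h3 d hd _)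
  rw [hψ, h1 d hd ψ, zero_comp]

lemma perp_shift_neg_one (hD : IsTStructure C D) {x : C}
    (hx : x ∈ perpSet C D) : x⟦(-1:ℤ)⟧ ∈ perpSet C D := by
  intro d hd φ
  have h0 : φ⟦(1:ℤ)⟧' ≫ (shCancel' 1 x).hom = 0 :=
    hx _ (hD.shift_mem d hd) _
  have h1 : φ⟦(1:ℤ)⟧' = 0 := by
    calc φ⟦(1:ℤ)⟧' = (φ⟦(1:ℤ)⟧' ≫ (shCancel' 1 x).hom) ≫ (shCancel' 1 x).inv := by simp
      _ = 0 := by rw [h0, zero_comp]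
  apply (shiftFunctor C (1:ℤ)).map_injective
  rw [h1, Functor.map_zero]

lemma mem_shift_nonneg (hD : IsTStructure C D) {x : C} (hx : x ∈ D) :
    ∀ k : ℕ, x⟦(k:ℤ)⟧ ∈ D := by
  intro k; induction k with
  | zero => simpa using hD.isoClosed (shz x).symm hx
  | succ k ih =>
      exact hD.isoClosed (shIso (by push_cast; ring) x) (hD.shift_mem _ ih)

lemma mem_shift_of_nonneg (hD : IsTStructure C D) {x : C} (hx : x ∈ D)
    {m : ℤ} (hm : 0 ≤ m) : x⟦m⟧ ∈ D := by
  obtain ⟨k, rfl⟩ : ∃ k : ℕ, m = (k:ℤ) := ⟨m.toNat, by omega⟩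
  exact mem_shift_nonneg hD hx k

lemma perp_shift_nonpos (hD : IsTStructure C D) {x : C} (hx : x ∈ perpSet C D) :
    ∀ k : ℕ, x⟦(-(k:ℤ))⟧ ∈ perpSet C D := by
  intro k; induction k with
  | zero => simpa using perp_iso (shz x).symm hx
  | succ k ih =>
      exact perp_iso (shIso (by push_cast; ring) x) (perp_shift_neg_one hD ih)

lemma perp_shift_of_nonpos (hD : IsTStructure C D) {x : C} (hx : x ∈ perpSet C D)
    {m : ℤ} (hm : m ≤ 0) : x⟦m⟧ ∈ perpSet C D := by
  obtain ⟨k, rfl⟩ : ∃ k : ℕ, m = -(k:ℤ) := ⟨(-m).toNat, by omega⟩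
  exact perp_shift_nonpos hD hx k

lemma extClosure_elim {S P : Set C} (hP0 : ∀ {x : C}, IsZero x → x ∈ P)
    (hPiso : ∀ {x y : C}, (x ≅ y) → x ∈ P → y ∈ P)
    (hPext : ∀ {a b c : C} (f : a ⟶ b) (g : b ⟶ c) (h : c ⟶ a⟦(1:ℤ)⟧),
      (Triangle.mk f g h ∈ distTriang C) → a ∈ P → c ∈ P → b ∈ P)
    (hSP : S ⊆ P) {c : C} (h : ExtClosure C S c) : c ∈ P := by
  induction h with
  | of h => exact hSP h
  | zero h => exact hP0 h
  | iso e _ ih => exact hPiso e ih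
  | ext f g h hT _ _ iha ihc => exact hPext f g h hT iha ihc

def genPos (D : Set C) : Set C :=
  {x | ∃ a ∈ heartSet C D, ∃ m : ℤ, 0 ≤ m ∧ x = (a⟦m⟧ : C)}

def genNeg (D : Set C) : Set C :=
  {x | ∃ a ∈ heartSet C D, ∃ m : ℤ, m ≤ -1 ∧ x = (a⟦m⟧ : C)}

lemma decompPos (hD : IsTStructure C D) :
    ∀ (n : ℕ) (c : C), c ∈ D → c⟦(-(n:ℤ))⟧ ∈ perpSet C D →
      ExtClosure C (genPos D) c := by
  intro n
  induction n with
  | zero =>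
      intro c hc hc'
      rw [show (-((0:ℕ):ℤ)) = 0 by simp] at hc'
      have hcp : c ∈ perpSet C D := perp_iso (shz c) hc'
      exact ExtClosure.zero (by rw [IsZero.iff_id_eq_zero]; exact hcp c hc (𝟙 c))
  | succ n ih =>
      intro c hc hc'
      obtain ⟨d, hd, d', hd', f, g, h, hT⟩ := hD.exists_triangle (c⟦(-(n:ℤ))⟧)
      -- c⟦-n⟧⟦-1⟧ ∈ perp
      have hcn1 : (c⟦(-(n:ℤ))⟧)⟦(-1:ℤ)⟧ ∈ perpSet C D :=
        perp_iso (shIso (by push_cast; ring) c).symm hc'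
      -- d ∈ heart
      obtain ⟨f₁, g₁, h₁t, hT₁⟩ := dist_shift hT (-1)
      have hdm : (d⟦(-1:ℤ)⟧) ∈ perpSet C D :=
        ext_perp (inv_rot_of_distTriang _ hT₁)
          (perp_shift_neg_one hD (perp_shift_neg_one hD hd')) hcn1
      have hdheart : d ∈ heartSet C D := ⟨hd, hdm⟩
      -- d'⟦n⟧ ∈ D
      obtain ⟨f₂, g₂, h₂t, hT₂⟩ := dist_shift (rot_of_distTriang _ hT) (n:ℤ)
      have hd'D : (d'⟦(n:ℤ)⟧) ∈ D :=
        ext_mem hD hT₂ (hD.isoClosed (shCancel' (n:ℤ) c).symm hc)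
          (mem_shift_of_nonneg hD (hD.shift_mem d hd) (Int.natCast_nonneg n))
      -- IH for d'⟦n⟧
      have hihd' : ExtClosure C (genPos D) (d'⟦(n:ℤ)⟧) :=
        ih _ hd'D (perp_iso (shCancel (n:ℤ) d').symm hd')
      -- main triangle shifted by n
      obtain ⟨f₃, g₃, h₃t, hT₃⟩ := dist_shift hT (n:ℤ)
      have hgen : ExtClosure C (genPos D) (d⟦(n:ℤ)⟧) :=
        ExtClosure.of ⟨d, hdheart, (n:ℤ), Int.natCast_nonneg n, rfl⟩
      exact ExtClosure.iso (shCancel' (n:ℤ) c)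
        (ExtClosure.ext f₃ g₃ h₃t hT₃ hgen hihd')

lemma decompNeg (hD : IsTStructure C D) :
    ∀ (n : ℕ) (c : C), c ∈ perpSet C D → c⟦(n:ℤ)⟧ ∈ D →
      ExtClosure C (genNeg D) c := by
  intro n
  induction n with
  | zero =>
      intro c hc hc'
      rw [show (((0:ℕ):ℤ)) = 0 by simp] at hc'
      have hcD : c ∈ D := hD.isoClosed (shz c) hc'
      exact ExtClosure.zero (by rw [IsZero.iff_id_eq_zero]; exact hc c hcD (𝟙 c))
  | succ n ih =>
      intro c hc hc'
      obtain ⟨d, hd, d', hd', f, g, h, hT⟩ := hD.exists_triangle (c⟦(n:ℤ)⟧)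
      -- c⟦n⟧⟦1⟧ ∈ D
      have hcn1 : (c⟦(n:ℤ)⟧)⟦(1:ℤ)⟧ ∈ D :=
        hD.isoClosed (shIso (by push_cast; ring) c).symm hc'
      -- d'⟦1⟧ ∈ heart
      obtain ⟨f₁, g₁, h₁t, hT₁⟩ := dist_shift (rot_of_distTriang _ hT) (1:ℤ)
      have hd'1D : (d'⟦(1:ℤ)⟧) ∈ D :=
        ext_mem hD hT₁ hcn1 (hD.shift_mem _ (hD.shift_mem d hd))
      have hd'heart : (d'⟦(1:ℤ)⟧) ∈ heartSet C D :=
        ⟨hd'1D, perp_iso (shCancel (1:ℤ) d').symm hd'⟩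
      -- third piece
      have hpiece : ExtClosure C (genNeg D) (d'⟦(-(n:ℤ))⟧) :=
        ExtClosure.iso (shIso (show (1:ℤ) + (-((n:ℤ)+1)) = -(n:ℤ) by ring) d')
          (ExtClosure.of ⟨d'⟦(1:ℤ)⟧, hd'heart, -((n:ℤ)+1), by omega, rfl⟩)
      -- d⟦-n⟧ ∈ perp
      obtain ⟨f₂, g₂, h₂t, hT₂⟩ := dist_shift (inv_rot_of_distTriang _ hT) (-(n:ℤ))
      have hdp : (d⟦(-(n:ℤ))⟧) ∈ perpSet C D :=
        ext_perp hT₂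
          (perp_shift_of_nonpos hD (perp_shift_neg_one hD hd') (by omega))
          (perp_iso (shCancel (n:ℤ) c).symm hc)
      -- IH for d⟦-n⟧
      have hihd : ExtClosure C (genNeg D) (d⟦(-(n:ℤ))⟧) :=
        ih _ hdp (hD.isoClosed (shCancel' (n:ℤ) d).symm hd)
      -- main triangle shifted by -n
      obtain ⟨f₃, g₃, h₃t, hT₃⟩ := dist_shift hT (-(n:ℤ))
      exact ExtClosure.iso (shCancel (n:ℤ) c)
        (ExtClosure.ext f₃ g₃ h₃t hT₃ hihd hpiece)

lemma aisle_subset (hD : IsTStructure C D) (hDb : IsBounded C D)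
    (hD' : IsTStructure C D') (hsub : heartSet C D ⊆ heartSet C D') :
    D ⊆ D' := by
  intro c hc
  obtain ⟨n, _, hn2⟩ := hDb c
  refine extClosure_elim (fun hz => zero_mem hD' hz)
    (fun e hx => hD'.isoClosed e hx)
    (fun f g h hT ha hc => ext_mem hD' hT ha hc) ?_ (decompPos hD n c hc hn2)
  rintro x ⟨a, ha, m, hm, rfl⟩
  exact mem_shift_of_nonneg hD' (hsub ha).1 hm

lemma perp_subset (hD : IsTStructure C D) (hDb : IsBounded C D)
    (hD' : IsTStructure C D') (hsub : heartSet C D ⊆ heartSet C D') :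
    perpSet C D ⊆ perpSet C D' := by
  intro c hc
  obtain ⟨n, hn1, _⟩ := hDb c
  refine extClosure_elim (fun hz => perp_zero hz)
    (fun e hx => perp_iso e hx)
    (fun f g h hT ha hc => ext_perp hT ha hc) ?_ (decompNeg hD n c hc hn1)
  rintro x ⟨a, ha, m, hm, rfl⟩
  have h2 : (a⟦(-1:ℤ)⟧) ∈ perpSet C D' := (hsub ha).2
  exact perp_iso (shIso (show (-1:ℤ) + (m+1) = m by ring) a)
    (perp_shift_of_nonpos hD' h2 (by omega))

end Aux

/-- If the hearts of two bounded t-structures are nested, they are equal. -/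
theorem heart_subset_heart_eq (D D' : Set C)
    (hD : IsTStructure C D) (hDb : IsBounded C D)
    (hD' : IsTStructure C D') (hD'b : IsBounded C D')
    (hsub : heartSet C D ⊆ heartSet C D') :
    heartSet C D = heartSet C D' := by
  have hC : D ⊆ D' := aisle_subset hD hDb hD' hsub
  have hPD : perpSet C D ⊆ perpSet C D' := perp_subset hD hDb hD' hsub
  have hE : D' ⊆ D := fun x hx =>
    mem_of_perp hD (fun y hy φ => hPD hy x hx φ)
  have hEq : D = D' := Set.Subset.antisymm hC hE
  rw [hEq]

end Paper
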